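/- arXiv:2209.01939 — 3 statements merged into one kernel-verified Lean document; each statement's English description precedes it below -/
import Mathlib

section
/- For geometric sampling with parameter p ∈ (0,1), t₀ = 1/p ∈ ℕ, and probabilities p_{s,r} = p(1−p)^{s−r−1} for t₀ ≤ r < s and p_{s,r} = p(1−p)^{s−t₀} for 0 ≤ r < t₀, the collision probability satisfies Σ_{r=0}^{s−1} p_{s,r}² = (p/(2−p))·(1 + (1−p)^{2(s−t₀)+1}) for all s ≥ t₀. -/
open Finset

theorem geometric_sampling_collision_probability (p : ℝ) (hp : p ∈ Set.Ioo (0 : ℝ) 1)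
    (t₀ : ℕ) (ht₀ : (t₀ : ℝ) * p = 1) (s : ℕ) (hs : t₀ ≤ s) :
    ∑ r ∈ Finset.range s,
        (if r < t₀ then p * (1 - p) ^ (s - t₀) else p * (1 - p) ^ (s - r - 1)) ^ 2 =
      (p / (2 - p)) * (1 + (1 - p) ^ (2 * (s - t₀) + 1)) := by
  obtain ⟨hp0, hp1⟩ := hp
  obtain ⟨M, rfl⟩ : ∃ M, s = t₀ + M := ⟨s - t₀, by omega⟩
  set q : ℝ := 1 - p with hq
  have hqpos : 0 < q := by simp [hq]; linarith
  have hq1 : q < 1 := by simp [hq]; linarith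
  have hq2 : q ^ 2 ≠ 1 := by nlinarith
  have h2p : (2 : ℝ) - p ≠ 0 := by linarith
  have hMr : t₀ + M - t₀ = M := by omega
  rw [Finset.range_eq_Ico,
    ← Finset.sum_Ico_consecutive _ (Nat.zero_le t₀) (Nat.le_add_right t₀ M)]
  have h1 : ∑ r ∈ Finset.Ico 0 t₀,
      (if r < t₀ then p * q ^ (t₀ + M - t₀) else p * q ^ (t₀ + M - r - 1)) ^ 2
      = (t₀ : ℝ) * (p * q ^ M) ^ 2 := by
    rw [Finset.sum_congr rfl (fun r hr => by
      rw [if_pos (by simpa using (Finset.mem_Ico.mp hr).2), hMr])]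
    simp [mul_comm]
  have h2 : ∑ r ∈ Finset.Ico t₀ (t₀ + M),
      (if r < t₀ then p * q ^ (t₀ + M - t₀) else p * q ^ (t₀ + M - r - 1)) ^ 2
      = ∑ i ∈ Finset.range M, (p * q ^ i) ^ 2 := by
    rw [Finset.sum_Ico_eq_sum_range]
    rw [Finset.sum_congr rfl (fun i hi => by
      rw [if_neg (by omega), show t₀ + M - (t₀ + i) - 1 = M - 1 - i from by omega] : ∀ i ∈ Finset.range (t₀ + M - t₀),
        (if t₀ + i < t₀ then p * q ^ (t₀ + M - t₀) else p * q ^ (t₀ + M - (t₀ + i) - 1)) ^ 2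
          = (p * q ^ (M - 1 - i)) ^ 2)]
    rw [hMr]
    exact Finset.sum_range_reflect (fun i => (p * q ^ i) ^ 2) M
  rw [h1, h2]
  have h3 : ∑ i ∈ Finset.range M, (p * q ^ i) ^ 2
      = p ^ 2 * (((q ^ 2) ^ M - 1) / (q ^ 2 - 1)) := by
    rw [← geom_sum_eq hq2, Finset.mul_sum]
    exact Finset.sum_congr rfl fun i _ => by
      rw [mul_pow, ← pow_mul, ← pow_mul, Nat.mul_comm]
  rw [h3, hMr]
  have hqM : (q ^ 2) ^ M = q ^ (2 * M) := by rw [← pow_mul]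
  have hexp : q ^ (2 * M + 1) = q * q ^ (2 * M) := by ring
  have ht : (t₀ : ℝ) = 1 / p := by rw [eq_div_iff hp0.ne']; exact ht₀
  rw [hqM, hexp, ht]
  have hq2' : q ^ 2 - 1 = -(p * (2 - p)) := by simp [hq]; ring
  rw [hq2']
  have hsq : (p * q ^ M) ^ 2 = p ^ 2 * q ^ (2 * M) := by
    rw [mul_pow, ← pow_mul, Nat.mul_comm]
  rw [hsq]
  field_simp
  ring
end

section
/- Let I = {t₀,…,t}, weights w_s ≥ 0 with Σ w_s ≤ 1, and for each s ∈ I a probability distribution (p_{s,r})_{0≤r<s}. Suppose random variables f(Z_s, Z_r) (for r < s, with Z_0, Z_1, … i.i.d.) have all pairwise covariances bounded in absolute value by σ² and that p_{s,r} ≤ p_{s',r} whenever s > s'. Then the variance of Σ_{s∈I} w_s Σ_{r<s} p_{s,r} f(Z_s, Z_r) is at most 4σ²·Σ_{s∈I} w_s² + 2σ²·Σ_{s∈I} Σ_{s'=t₀}^{s−1} w_s w_{s'} Σ_{r<s'} p_{s',r}², where covariance terms with four distinct indices among {s, s', r, r'} vanish by independence. -/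
open MeasureTheory ProbabilityTheory Finset

/-- Covariance of two real random variables. -/
noncomputable def covar {Ω : Type*} [MeasurableSpace Ω] (μ : Measure Ω)
    (X Y : Ω → ℝ) : ℝ :=
  ∫ ω, (X ω - ∫ ω', X ω' ∂μ) * (Y ω - ∫ ω', Y ω' ∂μ) ∂μ


section Aux

variable {Ω α : Type*} [MeasurableSpace Ω] [MeasurableSpace α]

lemma memL2_mul_integrable {μ : Measure Ω} {X Y : Ω → ℝ}
    (hX : MemLp X 2 μ) (hY : MemLp Y 2 μ) : Integrable (fun ω => X ω * Y ω) μ := by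
  have h := hY.smul (φ := X) hX (p := 2) (q := 2) (r := 1)
  exact memLp_one_iff_integrable.mp h

lemma sq_integral_le_integral_sq {μ : Measure α} [IsProbabilityMeasure μ] {g : α → ℝ}
    (hg : MemLp g 2 μ) : (∫ x, g x ∂μ) ^ 2 ≤ ∫ x, g x ^ 2 ∂μ := by
  have h := variance_nonneg g μ
  rw [variance_eq_sub hg] at h
  simp only [Pi.pow_apply] at h
  linarith

lemma margL2 {ν : Measure α} [IsProbabilityMeasure ν] {g : α × α → ℝ}
    (hg : Measurable g) (h2 : MemLp g 2 (ν.prod ν)) :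
    MemLp (fun x => ∫ y, g (x, y) ∂ν) 2 ν := by
  have hsm : StronglyMeasurable fun x => ∫ y, g (x, y) ∂ν :=
    hg.stronglyMeasurable.integral_prod_right'
  rw [memLp_two_iff_integrable_sq hsm.aestronglyMeasurable]
  have hgsq : Integrable (fun q => g q ^ 2) (ν.prod ν) := by
    have := (memLp_two_iff_integrable_sq hg.aestronglyMeasurable).mp h2
    simpa [Pi.pow_apply] using this
  have hmaj : Integrable (fun x => ∫ y, g (x, y) ^ 2 ∂ν) ν := hgsq.integral_prod_left
  have hae : ∀ᵐ x ∂ν, Integrable (fun y => g (x, y) ^ 2) ν :=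
    ((integrable_prod_iff (hgsq.aestronglyMeasurable)).mp hgsq).1
  refine Integrable.mono hmaj (hsm.pow 2).aestronglyMeasurable ?_
  filter_upwards [hae] with x hx
  have hsec : MemLp (fun y => g (x, y)) 2 ν := by
    exact (memLp_two_iff_integrable_sq
      (hg.comp measurable_prodMk_left).aestronglyMeasurable).mpr hx
  have h1 : (∫ y, g (x, y) ∂ν) ^ 2 ≤ ∫ y, g (x, y) ^ 2 ∂ν := sq_integral_le_integral_sq hsec
  have h2' : (0:ℝ) ≤ ∫ y, g (x, y) ^ 2 ∂ν := integral_nonneg fun y => sq_nonneg _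
  simp only [Real.norm_eq_abs, abs_pow, sq_abs]
  rw [abs_of_nonneg h2']
  exact h1

end Aux

section Aux2

variable {Ω α : Type*} [MeasurableSpace Ω] [MeasurableSpace α]
variable {μ : Measure Ω} [IsProbabilityMeasure μ]
variable {Z : ℕ → Ω → α}
variable {ν : Measure α} [IsProbabilityMeasure ν]

lemma pair_law (hmeas : ∀ i, Measurable (Z i))
    (hindep : iIndepFun Z μ)
    (hν : ∀ i, μ.map (Z i) = ν) {a b : ℕ} (hab : a ≠ b) :
    μ.map (fun ω => (Z a ω, Z b ω)) = ν.prod ν := by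
  have h := (indepFun_iff_map_prod_eq_prod_map_map (hmeas a).aemeasurable
    (hmeas b).aemeasurable).mp (hindep.indepFun hab)
  rw [h, hν a, hν b]

lemma int_pair (hmeas : ∀ i, Measurable (Z i))
    (hindep : iIndepFun Z μ)
    (hν : ∀ i, μ.map (Z i) = ν) {a b : ℕ} (hab : a ≠ b) (G : α × α → ℝ)
    (hG : AEStronglyMeasurable G (ν.prod ν)) :
    ∫ ω, G (Z a ω, Z b ω) ∂μ = ∫ q, G q ∂(ν.prod ν) := by
  rw [← pair_law hmeas hindep hν hab] at hG ⊢
  exact (integral_map ((hmeas a).prodMk (hmeas b)).aemeasurable hG).symm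

lemma memL2_pair (hmeas : ∀ i, Measurable (Z i))
    (hindep : iIndepFun Z μ)
    (hν : ∀ i, μ.map (Z i) = ν) {a b : ℕ} (hab : a ≠ b) (G : α × α → ℝ)
    (hG : AEStronglyMeasurable G (ν.prod ν)) (h2 : MemLp G 2 (ν.prod ν)) :
    MemLp (fun ω => G (Z a ω, Z b ω)) 2 μ := by
  rw [← pair_law hmeas hindep hν hab] at hG h2
  exact (memLp_map_measure_iff hG ((hmeas a).prodMk (hmeas b)).aemeasurable).mp h2

lemma int_single (hmeas : ∀ i, Measurable (Z i)) (hν : ∀ i, μ.map (Z i) = ν) (a : ℕ) (φ : α → ℝ) (hφ : AEStronglyMeasurable φ ν) :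
    ∫ ω, φ (Z a ω) ∂μ = ∫ x, φ x ∂ν := by
  rw [← hν a] at hφ ⊢
  exact (integral_map (hmeas a).aemeasurable hφ).symm

lemma memL2_single (hmeas : ∀ i, Measurable (Z i)) (hν : ∀ i, μ.map (Z i) = ν) (a : ℕ) (φ : α → ℝ) (hφ : AEStronglyMeasurable φ ν)
    (h2 : MemLp φ 2 ν) : MemLp (fun ω => φ (Z a ω)) 2 μ := by
  rw [← hν a] at hφ h2
  exact (memLp_map_measure_iff hφ (hmeas a).aemeasurable).mp h2

lemma kill_lemma (hmeas : ∀ i, Measurable (Z i))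
    (hindep : iIndepFun Z μ)
    (hν : ∀ i, μ.map (Z i) = ν) (a b c d : ℕ) (hab : a ≠ b) (hac : a ≠ c) (had : a ≠ d)
    (g ψ : α → α → ℝ)
    (hgm : Measurable (Function.uncurry g)) (hψm : Measurable (Function.uncurry ψ))
    (hgL2 : MemLp (fun ω => g (Z a ω) (Z b ω)) 2 μ)
    (hψL2 : MemLp (fun ω => ψ (Z c ω) (Z d ω)) 2 μ)
    (hcent : ∀ᵐ y ∂ν, ∫ x, g x y ∂ν = 0) :
    ∫ ω, g (Z a ω) (Z b ω) * ψ (Z c ω) (Z d ω) ∂μ = 0 := by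
  classical
  set T : Ω → α × α × α := fun ω => (Z b ω, Z c ω, Z d ω) with hT
  have hTmeas : Measurable T := (hmeas b).prodMk ((hmeas c).prodMk (hmeas d))
  -- independence of T and Z a
  have hdisj : Disjoint ({b, c, d} : Finset ℕ) ({a} : Finset ℕ) := by
    simp only [Finset.disjoint_singleton_right, Finset.mem_insert, Finset.mem_singleton]
    push_neg
    exact ⟨hab, hac, had⟩
  have base := hindep.indepFun_finset ({b, c, d} : Finset ℕ) ({a} : Finset ℕ) hdisj hmeas
  have hbm : b ∈ ({b, c, d} : Finset ℕ) := by simp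
  have hcm : c ∈ ({b, c, d} : Finset ℕ) := by simp
  have hdm : d ∈ ({b, c, d} : Finset ℕ) := by simp
  have ham : a ∈ ({a} : Finset ℕ) := by simp
  set φL : (∀ _ : ({b, c, d} : Finset ℕ), α) → α × α × α :=
    fun v => (v ⟨b, hbm⟩, v ⟨c, hcm⟩, v ⟨d, hdm⟩) with hφL
  set φR : (∀ _ : ({a} : Finset ℕ), α) → α := fun v => v ⟨a, ham⟩ with hφR
  have hφLm : Measurable φL :=
    (measurable_pi_apply _).prodMk ((measurable_pi_apply _).prodMk (measurable_pi_apply _))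
  have hφRm : Measurable φR := measurable_pi_apply _
  have indep : IndepFun T (Z a) μ := base.comp hφLm hφRm
  -- joint law
  have law : μ.map (fun ω => (T ω, Z a ω)) = (μ.map T).prod ν := by
    rw [← hν a]
    exact (indepFun_iff_map_prod_eq_prod_map_map hTmeas.aemeasurable
      (hmeas a).aemeasurable).mp indep
  set Φ : (α × α × α) × α → ℝ := fun q => g q.2 q.1.1 * ψ q.1.2.1 q.1.2.2 with hΦ
  have hΦm : Measurable Φ := by
    have h1 : Measurable fun q : (α × α × α) × α => g q.2 q.1.1 :=
      hgm.comp (measurable_snd.prodMk (measurable_fst.comp measurable_fst))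
    have h2 : Measurable fun q : (α × α × α) × α => ψ q.1.2.1 q.1.2.2 :=
      hψm.comp (((measurable_snd.comp measurable_fst).fst).prodMk
        ((measurable_snd.comp measurable_fst).snd))
    exact h1.mul h2
  have hIntμ : Integrable (fun ω => Φ (T ω, Z a ω)) μ := by
    have := memL2_mul_integrable hgL2 hψL2
    exact this
  have hpairm : Measurable fun ω => (T ω, Z a ω) := hTmeas.prodMk (hmeas a)
  have hIntP : Integrable Φ ((μ.map T).prod ν) := by
    rw [← law]
    exact (integrable_map_measure hΦm.aestronglyMeasurable hpairm.aemeasurable).mpr hIntμ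
  have step1 : ∫ ω, g (Z a ω) (Z b ω) * ψ (Z c ω) (Z d ω) ∂μ
      = ∫ q, Φ q ∂((μ.map T).prod ν) := by
    rw [← law, integral_map hpairm.aemeasurable hΦm.aestronglyMeasurable]
  rw [step1, integral_prod _ hIntP]
  -- inner integral
  have hfst : (μ.map T).map Prod.fst = ν := by
    rw [Measure.map_map measurable_fst hTmeas]
    exact hν b
  have hms : MeasurableSet {y : α | ∫ x, g x y ∂ν = 0} := by
    have : Measurable fun y => ∫ x, Function.uncurry g (x, y) ∂ν :=
      hgm.stronglyMeasurable.integral_prod_left'.measurable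
    exact measurableSet_eq_fun this measurable_const
  have hcent' : ∀ᵐ y ∂((μ.map T).map Prod.fst), ∫ x, g x y ∂ν = 0 := by
    rw [hfst]; exact hcent
  have hae : ∀ᵐ p ∂(μ.map T), ∫ x, g x p.1 ∂ν = 0 :=
    (ae_map_iff measurable_fst.aemeasurable hms).mp hcent'
  have : ∀ᵐ p ∂(μ.map T), ∫ x, Φ (p, x) ∂ν = 0 := by
    filter_upwards [hae] with p hp
    have : ∫ x, Φ (p, x) ∂ν = (∫ x, g x p.1 ∂ν) * ψ p.2.1 p.2.2 := by
      simp only [hΦ]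
      exact integral_mul_const _ _
    rw [this, hp, zero_mul]
  rw [integral_congr_ae this, integral_zero]

end Aux2
section Aux3

variable {Ω α : Type*} [MeasurableSpace Ω] [MeasurableSpace α]
variable {μ : Measure Ω} [IsProbabilityMeasure μ]
variable {Z : ℕ → Ω → α}
variable {ν : Measure α} [IsProbabilityMeasure ν]

lemma fst_mp : MeasurePreserving (Prod.fst : α × α → α) (ν.prod ν) ν :=
  ⟨measurable_fst, by simp⟩

lemma snd_mp : MeasurePreserving (Prod.snd : α × α → α) (ν.prod ν) ν :=
  ⟨measurable_snd, by simp⟩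

/-- Expectation of `φ(Z i) * χ(Z j)`. -/
lemma single_single (hmeas : ∀ i, Measurable (Z i))
    (hindep : iIndepFun Z μ)
    (hν : ∀ i, μ.map (Z i) = ν) (i j : ℕ)
    (φ χ : α → ℝ) (hφm : Measurable φ) (hχm : Measurable χ) :
    ∫ ω, φ (Z i ω) * χ (Z j ω) ∂μ =
      if i = j then ∫ x, φ x * χ x ∂ν else (∫ x, φ x ∂ν) * ∫ x, χ x ∂ν := by
  split_ifs with hij
  · subst hij
    exact int_single hmeas hν i (fun x => φ x * χ x) (hφm.mul hχm).aestronglyMeasurable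
  · have h1 : ∫ ω, φ (Z i ω) * χ (Z j ω) ∂μ = ∫ q : α × α, φ q.1 * χ q.2 ∂(ν.prod ν) :=
      int_pair hmeas hindep hν hij (fun q => φ q.1 * χ q.2)
        ((hφm.comp measurable_fst).mul (hχm.comp measurable_snd)).aestronglyMeasurable
    rw [h1, integral_prod_mul (f := φ) (g := χ)]

/-- `φ(Z i) * h(Z s, Z r)` has zero expectation when `h` is doubly centered. -/
lemma phi_h_zero (hmeas : ∀ i, Measurable (Z i))
    (hindep : iIndepFun Z μ)
    (hν : ∀ i, μ.map (Z i) = ν)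
    (h : α → α → ℝ) (hhm : Measurable (Function.uncurry h))
    (hh2 : MemLp (Function.uncurry h) 2 (ν.prod ν))
    (hc1 : ∀ᵐ y ∂ν, ∫ x, h x y ∂ν = 0) (hc2 : ∀ᵐ x ∂ν, ∫ y, h x y ∂ν = 0)
    (φ : α → ℝ) (hφm : Measurable φ) (hφ2 : MemLp φ 2 ν)
    (i s r : ℕ) (hrs : r < s) :
    ∫ ω, φ (Z i ω) * h (Z s ω) (Z r ω) ∂μ = 0 := by
  have hsr : s ≠ r := Nat.ne_of_gt hrs
  have hφμ : MemLp (fun ω => φ (Z i ω)) 2 μ :=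
    memL2_single hmeas hν i φ hφm.aestronglyMeasurable hφ2
  have hHμ : MemLp (fun ω => h (Z s ω) (Z r ω)) 2 μ :=
    memL2_pair hmeas hindep hν hsr (Function.uncurry h) hhm.aestronglyMeasurable hh2
  have hre : (fun ω => φ (Z i ω) * h (Z s ω) (Z r ω))
      = fun ω => h (Z s ω) (Z r ω) * φ (Z i ω) := funext fun ω => by ring
  by_cases his : i = s
  · -- fresh index r in the second slot; use flipped h
    have hri : r ≠ i := by rw [his]; exact Nat.ne_of_lt hrs
    have hk := kill_lemma hmeas hindep hν r s i i
      (Nat.ne_of_lt hrs) hri hri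
      (fun x y => h y x) (fun x y => φ x)
      (hhm.comp measurable_swap) (hφm.comp measurable_fst)
      hHμ hφμ hc2
    rw [hre]
    simpa using hk
  · -- fresh index s in the first slot
    have hk := kill_lemma hmeas hindep hν s r i i
      hsr (fun hh => his hh.symm) (fun hh => his hh.symm)
      h (fun x y => φ x)
      hhm (hφm.comp measurable_fst)
      hHμ hφμ hc1
    rw [hre]
    simpa using hk

/-- Expectation of products of doubly-centered kernels. -/
lemma h_h_eval (hmeas : ∀ i, Measurable (Z i))
    (hindep : iIndepFun Z μ)
    (hν : ∀ i, μ.map (Z i) = ν)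
    (h : α → α → ℝ) (hhm : Measurable (Function.uncurry h))
    (hh2 : MemLp (Function.uncurry h) 2 (ν.prod ν))
    (hc1 : ∀ᵐ y ∂ν, ∫ x, h x y ∂ν = 0) (hc2 : ∀ᵐ x ∂ν, ∫ y, h x y ∂ν = 0)
    (s r s' r' : ℕ) (hrs : r < s) (hrs' : r' < s') :
    ∫ ω, h (Z s ω) (Z r ω) * h (Z s' ω) (Z r' ω) ∂μ =
      if s = s' ∧ r = r' then ∫ q, h q.1 q.2 ^ 2 ∂(ν.prod ν) else 0 := by
  have hsr : s ≠ r := Nat.ne_of_gt hrs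
  have hsr' : s' ≠ r' := Nat.ne_of_gt hrs'
  have hHμ : ∀ a b : ℕ, b < a → MemLp (fun ω => h (Z a ω) (Z b ω)) 2 μ := fun a b hba =>
    memL2_pair hmeas hindep hν (Nat.ne_of_gt hba) (Function.uncurry h)
      hhm.aestronglyMeasurable hh2
  split_ifs with heq
  · obtain ⟨h1, h2⟩ := heq
    subst h1; subst h2
    have hint := int_pair hmeas hindep hν hsr (fun q : α × α => h q.1 q.2 ^ 2)
      (hhm.pow_const 2).aestronglyMeasurable
    simpa [pow_two] using hint
  · by_cases hss : s = s'
    · subst hss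
      have hrr : r ≠ r' := fun hrr => heq ⟨rfl, hrr⟩
      have hk := kill_lemma hmeas hindep hν r' s s r
        (Nat.ne_of_lt hrs') (Nat.ne_of_lt hrs') hrr.symm
        (fun x y => h y x) h
        (hhm.comp measurable_swap) hhm
        (hHμ s r' hrs') (hHμ s r hrs) hc2
      rw [show (fun ω => h (Z s ω) (Z r ω) * h (Z s ω) (Z r' ω))
        = fun ω => h (Z s ω) (Z r' ω) * h (Z s ω) (Z r ω) from funext fun ω => mul_comm _ _]
      simpa using hk
    · by_cases hsr'2 : s = r'
      · subst hsr'2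
        have hs's : s' ≠ s := fun hh => hss hh.symm
        have hs'r : s' ≠ r := Nat.ne_of_gt (lt_trans hrs hrs')
        have hk := kill_lemma hmeas hindep hν s' s s r
          hs's hs's hs'r
          h h hhm hhm
          (hHμ s' s hrs') (hHμ s r hrs) hc1
        rw [show (fun ω => h (Z s ω) (Z r ω) * h (Z s' ω) (Z s ω))
          = fun ω => h (Z s' ω) (Z s ω) * h (Z s ω) (Z r ω) from funext fun ω => mul_comm _ _]
        simpa using hk
      · have hk := kill_lemma hmeas hindep hν s r s' r'
          hsr hss hsr'2
          h h hhm hhm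
          (hHμ s r hrs) (hHμ s' r' hrs') hc1
        simpa using hk

end Aux3
lemma key_product {Ω α : Type*} [MeasurableSpace Ω] [MeasurableSpace α]
    {μ : Measure Ω} [IsProbabilityMeasure μ] {Z : ℕ → Ω → α}
    {ν : Measure α} [IsProbabilityMeasure ν]
    (hmeas : ∀ i, Measurable (Z i))
    (hindep : iIndepFun Z μ)
    (hν : ∀ i, μ.map (Z i) = ν)
    (v u : α → ℝ) (h : α → α → ℝ)
    (hvm : Measurable v) (hum : Measurable u) (hhm : Measurable (Function.uncurry h))
    (hv2 : MemLp v 2 ν) (hu2 : MemLp u 2 ν)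
    (hh2 : MemLp (Function.uncurry h) 2 (ν.prod ν))
    (hv0 : ∫ x, v x ∂ν = 0) (hu0 : ∫ x, u x ∂ν = 0)
    (hc1 : ∀ᵐ y ∂ν, ∫ x, h x y ∂ν = 0) (hc2 : ∀ᵐ x ∂ν, ∫ y, h x y ∂ν = 0)
    (s r s' r' : ℕ) (hrs : r < s) (hrs' : r' < s') :
    ∫ ω, (v (Z s ω) + u (Z r ω) + h (Z s ω) (Z r ω)) *
        (v (Z s' ω) + u (Z r' ω) + h (Z s' ω) (Z r' ω)) ∂μ =
      (if s = s' then ∫ x, v x ^ 2 ∂ν else 0) + (if r = r' then ∫ x, u x ^ 2 ∂ν else 0)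
        + (if s = s' ∧ r = r' then ∫ q, h q.1 q.2 ^ 2 ∂(ν.prod ν) else 0)
        + (if s = r' then ∫ x, v x * u x ∂ν else 0)
        + (if r = s' then ∫ x, u x * v x ∂ν else 0) := by
  have hVL2 : ∀ i, MemLp (fun ω => v (Z i ω)) 2 μ := fun i =>
    memL2_single hmeas hν i v hvm.aestronglyMeasurable hv2
  have hUL2 : ∀ i, MemLp (fun ω => u (Z i ω)) 2 μ := fun i =>
    memL2_single hmeas hν i u hum.aestronglyMeasurable hu2
  have hHL2 : ∀ a b : ℕ, b < a → MemLp (fun ω => h (Z a ω) (Z b ω)) 2 μ := fun a b hba =>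
    memL2_pair hmeas hindep hν (Nat.ne_of_gt hba) (Function.uncurry h)
      hhm.aestronglyMeasurable hh2
  have I1 : Integrable (fun ω => v (Z s ω) * v (Z s' ω)) μ :=
    memL2_mul_integrable (hVL2 s) (hVL2 s')
  have I2 : Integrable (fun ω => v (Z s ω) * u (Z r' ω)) μ :=
    memL2_mul_integrable (hVL2 s) (hUL2 r')
  have I3 : Integrable (fun ω => v (Z s ω) * h (Z s' ω) (Z r' ω)) μ :=
    memL2_mul_integrable (hVL2 s) (hHL2 s' r' hrs')
  have I4 : Integrable (fun ω => u (Z r ω) * v (Z s' ω)) μ :=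
    memL2_mul_integrable (hUL2 r) (hVL2 s')
  have I5 : Integrable (fun ω => u (Z r ω) * u (Z r' ω)) μ :=
    memL2_mul_integrable (hUL2 r) (hUL2 r')
  have I6 : Integrable (fun ω => u (Z r ω) * h (Z s' ω) (Z r' ω)) μ :=
    memL2_mul_integrable (hUL2 r) (hHL2 s' r' hrs')
  have I7 : Integrable (fun ω => h (Z s ω) (Z r ω) * v (Z s' ω)) μ :=
    memL2_mul_integrable (hHL2 s r hrs) (hVL2 s')
  have I8 : Integrable (fun ω => h (Z s ω) (Z r ω) * u (Z r' ω)) μ :=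
    memL2_mul_integrable (hHL2 s r hrs) (hUL2 r')
  have I9 : Integrable (fun ω => h (Z s ω) (Z r ω) * h (Z s' ω) (Z r' ω)) μ :=
    memL2_mul_integrable (hHL2 s r hrs) (hHL2 s' r' hrs')
  have e1 : (fun ω => (v (Z s ω) + u (Z r ω) + h (Z s ω) (Z r ω)) *
        (v (Z s' ω) + u (Z r' ω) + h (Z s' ω) (Z r' ω)))
      = fun ω => (v (Z s ω) * v (Z s' ω) + v (Z s ω) * u (Z r' ω)
            + v (Z s ω) * h (Z s' ω) (Z r' ω))
          + (u (Z r ω) * v (Z s' ω) + u (Z r ω) * u (Z r' ω)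
            + u (Z r ω) * h (Z s' ω) (Z r' ω))
          + (h (Z s ω) (Z r ω) * v (Z s' ω) + h (Z s ω) (Z r ω) * u (Z r' ω)
            + h (Z s ω) (Z r ω) * h (Z s' ω) (Z r' ω)) := funext fun ω => by ring
  have I12 : Integrable (fun ω => v (Z s ω) * v (Z s' ω) + v (Z s ω) * u (Z r' ω)) μ :=
    I1.add I2
  have I123 : Integrable (fun ω => v (Z s ω) * v (Z s' ω) + v (Z s ω) * u (Z r' ω)
      + v (Z s ω) * h (Z s' ω) (Z r' ω)) μ := I12.add I3
  have I45 : Integrable (fun ω => u (Z r ω) * v (Z s' ω) + u (Z r ω) * u (Z r' ω)) μ :=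
    I4.add I5
  have I456 : Integrable (fun ω => u (Z r ω) * v (Z s' ω) + u (Z r ω) * u (Z r' ω)
      + u (Z r ω) * h (Z s' ω) (Z r' ω)) μ := I45.add I6
  have I78 : Integrable (fun ω => h (Z s ω) (Z r ω) * v (Z s' ω)
      + h (Z s ω) (Z r ω) * u (Z r' ω)) μ := I7.add I8
  have I123456 : Integrable (fun ω => (v (Z s ω) * v (Z s' ω) + v (Z s ω) * u (Z r' ω)
      + v (Z s ω) * h (Z s' ω) (Z r' ω))
      + (u (Z r ω) * v (Z s' ω) + u (Z r ω) * u (Z r' ω)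
      + u (Z r ω) * h (Z s' ω) (Z r' ω))) μ := I123.add I456
  have I789 : Integrable (fun ω => h (Z s ω) (Z r ω) * v (Z s' ω)
      + h (Z s ω) (Z r ω) * u (Z r' ω) + h (Z s ω) (Z r ω) * h (Z s' ω) (Z r' ω)) μ := I78.add I9
  rw [e1]
  rw [integral_add I123456 I789,
    integral_add I123 I456,
    integral_add I12 I3, integral_add I1 I2,
    integral_add I45 I6, integral_add I4 I5,
    integral_add I78 I9, integral_add I7 I8]
  have P1 : ∫ ω, v (Z s ω) * v (Z s' ω) ∂μ = if s = s' then ∫ x, v x ^ 2 ∂ν else 0 := by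
    rw [single_single hmeas hindep hν s s' v v hvm hvm, hv0]
    split_ifs <;> simp [pow_two]
  have P2 : ∫ ω, u (Z r ω) * u (Z r' ω) ∂μ = if r = r' then ∫ x, u x ^ 2 ∂ν else 0 := by
    rw [single_single hmeas hindep hν r r' u u hum hum, hu0]
    split_ifs <;> simp [pow_two]
  have P3 : ∫ ω, v (Z s ω) * u (Z r' ω) ∂μ = if s = r' then ∫ x, v x * u x ∂ν else 0 := by
    rw [single_single hmeas hindep hν s r' v u hvm hum, hv0]
    split_ifs <;> simp
  have P4 : ∫ ω, u (Z r ω) * v (Z s' ω) ∂μ = if r = s' then ∫ x, u x * v x ∂ν else 0 := by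
    rw [single_single hmeas hindep hν r s' u v hum hvm, hu0]
    split_ifs <;> simp
  have P5 : ∫ ω, v (Z s ω) * h (Z s' ω) (Z r' ω) ∂μ = 0 :=
    phi_h_zero hmeas hindep hν h hhm hh2 hc1 hc2 v hvm hv2 s s' r' hrs'
  have P6 : ∫ ω, u (Z r ω) * h (Z s' ω) (Z r' ω) ∂μ = 0 :=
    phi_h_zero hmeas hindep hν h hhm hh2 hc1 hc2 u hum hu2 r s' r' hrs'
  have P7 : ∫ ω, h (Z s ω) (Z r ω) * v (Z s' ω) ∂μ = 0 := by
    rw [show (fun ω => h (Z s ω) (Z r ω) * v (Z s' ω))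
      = fun ω => v (Z s' ω) * h (Z s ω) (Z r ω) from funext fun ω => mul_comm _ _]
    exact phi_h_zero hmeas hindep hν h hhm hh2 hc1 hc2 v hvm hv2 s' s r hrs
  have P8 : ∫ ω, h (Z s ω) (Z r ω) * u (Z r' ω) ∂μ = 0 := by
    rw [show (fun ω => h (Z s ω) (Z r ω) * u (Z r' ω))
      = fun ω => u (Z r' ω) * h (Z s ω) (Z r ω) from funext fun ω => mul_comm _ _]
    exact phi_h_zero hmeas hindep hν h hhm hh2 hc1 hc2 u hum hu2 r' s r hrs
  have P9 : ∫ ω, h (Z s ω) (Z r ω) * h (Z s' ω) (Z r' ω) ∂μ =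
      if s = s' ∧ r = r' then ∫ q, h q.1 q.2 ^ 2 ∂(ν.prod ν) else 0 :=
    h_h_eval hmeas hindep hν h hhm hh2 hc1 hc2 s r s' r' hrs hrs'
  rw [P1, P2, P3, P4, P5, P6, P7, P8, P9]
  ring
lemma fold_sq {β : Type*} (T : Finset β) (J : Finset ℕ) (φ : β → ℕ)
    (hφ : ∀ q ∈ T, φ q ∈ J) (c : β → ℝ) (K : ℝ) :
    ∑ q ∈ T, ∑ q' ∈ T, c q * c q' * (if φ q = φ q' then K else 0)
      = K * ∑ j ∈ J, (∑ q ∈ T, if φ q = j then c q else 0) ^ 2 := by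
  classical
  have key : ∀ q ∈ T, ∀ q' ∈ T,
      c q * c q' * (if φ q = φ q' then K else 0)
        = ∑ j ∈ J, K * ((if φ q = j then c q else 0) * (if φ q' = j then c q' else 0)) := by
    intro q hq q' hq'
    have hinner : ∑ j ∈ J, (if φ q = j then c q else 0) * (if φ q' = j then c q' else 0)
        = if φ q = φ q' then c q * c q' else 0 := by
      by_cases hqq : φ q = φ q'
      · rw [if_pos hqq, Finset.sum_eq_single (φ q)]
        · rw [if_pos rfl, if_pos hqq.symm]
        · intro j _ hne
          rw [if_neg (fun hh => hne hh.symm), zero_mul]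
        · intro hnot; exact absurd (hφ q hq) hnot
      · rw [if_neg hqq]
        apply Finset.sum_eq_zero
        intro j _
        by_cases h1 : φ q = j
        · rw [if_pos h1, if_neg, mul_zero]
          rw [← h1]; exact fun hh => hqq hh.symm
        · rw [if_neg h1, zero_mul]
    rw [← Finset.mul_sum, hinner]
    split_ifs <;> ring
  rw [Finset.sum_congr rfl fun q hq => Finset.sum_congr rfl fun q' hq' => key q hq q' hq']
  rw [Finset.sum_congr rfl fun q (hq : q ∈ T) => Finset.sum_comm
    (s := T) (t := J)
    (f := fun q' j => K * ((if φ q = j then c q else 0) * (if φ q' = j then c q' else 0)))]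
  rw [Finset.sum_comm]
  rw [Finset.mul_sum]
  refine Finset.sum_congr rfl fun j _ => ?_
  rw [pow_two, Finset.sum_mul_sum, Finset.mul_sum]
  refine Finset.sum_congr rfl fun q _ => ?_
  rw [Finset.mul_sum]
lemma final_algebra (t₀ t : ℕ) (ht : t₀ ≤ t) (w : ℕ → ℝ) (p : ℕ → ℕ → ℝ)
    (hw : ∀ s ∈ Finset.Icc t₀ t, 0 ≤ w s)
    (hp_nonneg : ∀ s ∈ Finset.Icc t₀ t, ∀ r < s, 0 ≤ p s r)
    (hp_sum : ∀ s ∈ Finset.Icc t₀ t, ∑ r ∈ Finset.range s, p s r = 1)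
    (hp_mono : ∀ s' s, t₀ ≤ s' → s' ≤ s → s ≤ t → ∀ r < s', p s r ≤ p s' r)
    (vv vu eta cvu σ2 : ℝ) (hvv : 0 ≤ vv) (hvu : 0 ≤ vu) (heta : 0 ≤ eta)
    (hc : cvu ^ 2 ≤ vv * vu) (hsig : vv + vu + eta ≤ σ2) :
    ∑ q ∈ (Finset.Icc t₀ t).sigma (fun s => Finset.range s),
      ∑ q' ∈ (Finset.Icc t₀ t).sigma (fun s => Finset.range s),
        (w q.1 * p q.1 q.2) * (w q'.1 * p q'.1 q'.2) *
          ((if q.1 = q'.1 then vv else 0) + (if q.2 = q'.2 then vu else 0)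
            + (if q.1 = q'.1 ∧ q.2 = q'.2 then eta else 0)
            + (if q.1 = q'.2 then cvu else 0) + (if q.2 = q'.1 then cvu else 0))
      ≤ 4 * σ2 * (∑ s ∈ Finset.Icc t₀ t, w s ^ 2)
        + 2 * σ2 * ∑ s ∈ Finset.Icc t₀ t, ∑ s' ∈ Finset.Ico t₀ s,
            w s * w s' * ∑ r ∈ Finset.range s', p s' r ^ 2 := by
  classical
  set I : Finset ℕ := Finset.Icc t₀ t with hI
  set T : Finset (Σ _ : ℕ, ℕ) := I.sigma (fun s => Finset.range s) with hTdef
  set W : ℝ := ∑ s ∈ I, w s ^ 2 with hWdef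
  set S : ℝ := ∑ s ∈ I, ∑ s' ∈ Finset.Ico t₀ s,
      w s * w s' * ∑ r ∈ Finset.range s', p s' r ^ 2 with hSdef
  set c : (Σ _ : ℕ, ℕ) → ℝ := fun q => w q.1 * p q.1 q.2 with hcdef
  have hmemT : ∀ q : (Σ _ : ℕ, ℕ), q ∈ T → q.1 ∈ I ∧ q.2 < q.1 := by
    intro q hq
    rw [hTdef, Finset.mem_sigma] at hq
    exact ⟨hq.1, Finset.mem_range.mp hq.2⟩
  have hIle : ∀ s ∈ I, t₀ ≤ s ∧ s ≤ t := by
    intro s hs; exact Finset.mem_Icc.mp hs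
  have hc0 : ∀ q ∈ T, 0 ≤ c q := by
    intro q hq
    obtain ⟨h1, h2⟩ := hmemT q hq
    exact mul_nonneg (hw _ h1) (hp_nonneg _ h1 _ h2)
  have inner_fst : ∀ j : ℕ, (∑ q ∈ T, if q.1 = j then c q else 0)
      = if j ∈ I then w j else 0 := by
    intro j
    rw [hTdef, Finset.sum_sigma]
    have h1 : ∀ s ∈ I, (∑ r ∈ Finset.range s, if s = j then c ⟨s, r⟩ else 0)
        = if s = j then w s else 0 := by
      intro s hs
      by_cases hsj : s = j
      · simp only [if_pos hsj, hcdef, ← Finset.mul_sum, hp_sum s hs, mul_one]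
      · simp [hsj]
    rw [Finset.sum_congr rfl h1, Finset.sum_ite_eq' I j w]
  set a : ℕ → ℝ := fun r => ∑ q ∈ T, if q.2 = r then c q else 0 with hadef
  have ha : ∀ r : ℕ, a r = ∑ s ∈ I, if r < s then w s * p s r else 0 := by
    intro r
    show (∑ q ∈ T, if q.2 = r then c q else 0) = _
    rw [hTdef, Finset.sum_sigma]
    refine Finset.sum_congr rfl fun s hs => ?_
    have h2 : (∑ r' ∈ Finset.range s, if r' = r then c ⟨s, r'⟩ else 0)
        = if r ∈ Finset.range s then c ⟨s, r⟩ else 0 :=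
      Finset.sum_ite_eq' (Finset.range s) r (fun r' => c ⟨s, r'⟩)
    rw [h2]
    simp only [Finset.mem_range, hcdef]
  set A : ℝ := ∑ r ∈ Finset.range t, (a r) ^ 2 with hAdef
  set X : ℝ := ∑ q ∈ T, c q * (if q.2 ∈ I then w q.2 else 0) with hXdef
  set P : ℝ := ∑ q ∈ T, (c q) ^ 2 with hPdef
  have hsndT : ∀ q : (Σ _ : ℕ, ℕ), q ∈ T → q.2 ∈ Finset.range t := by
    intro q hq
    obtain ⟨h1, h2⟩ := hmemT q hq
    exact Finset.mem_range.mpr (lt_of_lt_of_le h2 (hIle _ h1).2)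
  have hmain : (∑ q ∈ T, ∑ q' ∈ T, c q * c q' *
      ((if q.1 = q'.1 then vv else 0) + (if q.2 = q'.2 then vu else 0)
        + (if q.1 = q'.1 ∧ q.2 = q'.2 then eta else 0)
        + (if q.1 = q'.2 then cvu else 0) + (if q.2 = q'.1 then cvu else 0)))
      = vv * W + vu * A + eta * P + cvu * X + cvu * X := by
    have hsplit : (∑ q ∈ T, ∑ q' ∈ T, c q * c q' *
        ((if q.1 = q'.1 then vv else 0) + (if q.2 = q'.2 then vu else 0)
          + (if q.1 = q'.1 ∧ q.2 = q'.2 then eta else 0)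
          + (if q.1 = q'.2 then cvu else 0) + (if q.2 = q'.1 then cvu else 0)))
        = (∑ q ∈ T, ∑ q' ∈ T, c q * c q' * (if q.1 = q'.1 then vv else 0))
          + (∑ q ∈ T, ∑ q' ∈ T, c q * c q' * (if q.2 = q'.2 then vu else 0))
          + (∑ q ∈ T, ∑ q' ∈ T, c q * c q' * (if q.1 = q'.1 ∧ q.2 = q'.2 then eta else 0))
          + (∑ q ∈ T, ∑ q' ∈ T, c q * c q' * (if q.1 = q'.2 then cvu else 0))
          + (∑ q ∈ T, ∑ q' ∈ T, c q * c q' * (if q.2 = q'.1 then cvu else 0)) := by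
      simp only [mul_add, Finset.sum_add_distrib]
    rw [hsplit]
    have hD1 : (∑ q ∈ T, ∑ q' ∈ T, c q * c q' * (if q.1 = q'.1 then vv else 0)) = vv * W := by
      rw [fold_sq T I Sigma.fst (fun q hq => (hmemT q hq).1) c vv]
      rw [hWdef]
      congr 1
      refine Finset.sum_congr rfl fun j hj => ?_
      rw [inner_fst j, if_pos hj]
    have hD2 : (∑ q ∈ T, ∑ q' ∈ T, c q * c q' * (if q.2 = q'.2 then vu else 0)) = vu * A := by
      rw [fold_sq T (Finset.range t) Sigma.snd hsndT c vu]
    have hD3 : (∑ q ∈ T, ∑ q' ∈ T, c q * c q' * (if q.1 = q'.1 ∧ q.2 = q'.2 then eta else 0))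
        = eta * P := by
      have hq3 : ∀ q ∈ T, (∑ q' ∈ T, c q * c q' * (if q.1 = q'.1 ∧ q.2 = q'.2 then eta else 0))
          = c q ^ 2 * eta := by
        intro q hq
        have step : (∑ q' ∈ T, c q * c q' * (if q.1 = q'.1 ∧ q.2 = q'.2 then eta else 0))
            = ∑ q' ∈ T, if q = q' then c q * c q' * eta else 0 := by
          refine Finset.sum_congr rfl fun q' _ => ?_
          by_cases h : q = q'
          · rw [if_pos (by rw [h]; exact ⟨rfl, rfl⟩), if_pos h]
          · have hnc : ¬(q.1 = q'.1 ∧ q.2 = q'.2) := by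
              intro hcc
              exact h (Sigma.ext hcc.1 (heq_of_eq hcc.2))
            rw [if_neg hnc, if_neg h, mul_zero]
        rw [step, Finset.sum_ite_eq T q (fun q' => c q * c q' * eta), if_pos hq]
        ring
      rw [Finset.sum_congr rfl hq3, ← Finset.sum_mul, hPdef]
      ring
    have hD4 : (∑ q ∈ T, ∑ q' ∈ T, c q * c q' * (if q.1 = q'.2 then cvu else 0)) = cvu * X := by
      rw [Finset.sum_comm]
      have hq4 : ∀ q' ∈ T, (∑ q ∈ T, c q * c q' * (if q.1 = q'.2 then cvu else 0))
          = c q' * (if q'.2 ∈ I then w q'.2 else 0) * cvu := by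
        intro q' hq'
        have step : (∑ q ∈ T, c q * c q' * (if q.1 = q'.2 then cvu else 0))
            = ∑ q ∈ T, (if q.1 = q'.2 then c q else 0) * (c q' * cvu) := by
          refine Finset.sum_congr rfl fun q _ => ?_
          by_cases h : q.1 = q'.2
          · rw [if_pos h, if_pos h]; ring
          · rw [if_neg h, if_neg h, mul_zero, zero_mul]
        rw [step, ← Finset.sum_mul, inner_fst q'.2]
        ring
      rw [Finset.sum_congr rfl hq4, hXdef, Finset.mul_sum]
      refine Finset.sum_congr rfl fun q _ => ?_
      ring
    have hD5 : (∑ q ∈ T, ∑ q' ∈ T, c q * c q' * (if q.2 = q'.1 then cvu else 0)) = cvu * X := by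
      have hq5 : ∀ q ∈ T, (∑ q' ∈ T, c q * c q' * (if q.2 = q'.1 then cvu else 0))
          = c q * (if q.2 ∈ I then w q.2 else 0) * cvu := by
        intro q hq
        have step : (∑ q' ∈ T, c q * c q' * (if q.2 = q'.1 then cvu else 0))
            = ∑ q' ∈ T, (if q'.1 = q.2 then c q' else 0) * (c q * cvu) := by
          refine Finset.sum_congr rfl fun q' _ => ?_
          by_cases h : q.2 = q'.1
          · rw [if_pos h, if_pos h.symm]; ring
          · rw [if_neg h, if_neg (fun hh => h hh.symm), mul_zero, zero_mul]
        rw [step, ← Finset.sum_mul, inner_fst q.2]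
        ring
      rw [Finset.sum_congr rfl hq5, hXdef, Finset.mul_sum]
      refine Finset.sum_congr rfl fun q _ => ?_
      ring
    rw [hD1, hD2, hD3, hD4, hD5]
  have hW0 : 0 ≤ W := Finset.sum_nonneg fun s _ => sq_nonneg _
  have hA0 : 0 ≤ A := Finset.sum_nonneg fun r _ => sq_nonneg _
  have hS0 : 0 ≤ S := by
    rw [hSdef]
    refine Finset.sum_nonneg fun s hs => Finset.sum_nonneg fun s' hs' => ?_
    have hs'I : s' ∈ I := by
      rw [hI, Finset.mem_Icc]
      rw [Finset.mem_Ico] at hs'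
      exact ⟨hs'.1, le_trans (le_of_lt hs'.2) (hIle s hs).2⟩
    exact mul_nonneg (mul_nonneg (hw s hs) (hw s' hs'I))
      (Finset.sum_nonneg fun r _ => sq_nonneg _)
  have hX0 : 0 ≤ X := by
    rw [hXdef]
    refine Finset.sum_nonneg fun q hq => mul_nonneg (hc0 q hq) ?_
    by_cases h : q.2 ∈ I
    · rw [if_pos h]; exact hw _ h
    · rw [if_neg h]
  have hsq_le_one : ∀ s ∈ I, ∑ r ∈ Finset.range s, p s r ^ 2 ≤ 1 := by
    intro s hs
    have h1 : ∑ r ∈ Finset.range s, p s r ^ 2 ≤ (∑ r ∈ Finset.range s, p s r) ^ 2 :=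
      Finset.sum_sq_le_sq_sum_of_nonneg fun r hr =>
        hp_nonneg s hs r (Finset.mem_range.mp hr)
    rw [hp_sum s hs] at h1
    simpa using h1
  have hPW : P ≤ W := by
    rw [hPdef, hWdef, hTdef, Finset.sum_sigma]
    refine Finset.sum_le_sum fun s hs => ?_
    have h2 : (∑ r ∈ Finset.range s, c ⟨s, r⟩ ^ 2)
        = w s ^ 2 * ∑ r ∈ Finset.range s, p s r ^ 2 := by
      rw [Finset.mul_sum]
      exact Finset.sum_congr rfl fun r _ => by rw [hcdef]; ring
    rw [h2]
    calc w s ^ 2 * ∑ r ∈ Finset.range s, p s r ^ 2 ≤ w s ^ 2 * 1 :=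
          mul_le_mul_of_nonneg_left (hsq_le_one s hs) (sq_nonneg _)
      _ = w s ^ 2 := mul_one _
  have hE : ∀ s ∈ I, ∀ s' ∈ I, (∑ r ∈ Finset.range t,
        (if r < s then w s * p s r else 0) * (if r < s' then w s' * p s' r else 0))
      = ∑ r ∈ Finset.range (min s s'), (w s * p s r) * (w s' * p s' r) := by
    intro s hs s' hs'
    rw [← Finset.sum_subset
      (Finset.range_subset_range.mpr (le_trans (min_le_left s s') (hIle s hs).2))]
    · refine Finset.sum_congr rfl fun r hr => ?_
      rw [Finset.mem_range, lt_min_iff] at hr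
      rw [if_pos hr.1, if_pos hr.2]
    · intro r _ hr
      rw [Finset.mem_range, lt_min_iff, not_and_or] at hr
      rcases hr with hr | hr
      · rw [if_neg hr, zero_mul]
      · rw [if_neg hr, mul_zero]
  have hArep : A = ∑ s ∈ I, ∑ s' ∈ I,
      ∑ r ∈ Finset.range (min s s'), (w s * p s r) * (w s' * p s' r) := by
    rw [hAdef]
    have h1 : ∀ r : ℕ, a r ^ 2 = ∑ s ∈ I, ∑ s' ∈ I,
        (if r < s then w s * p s r else 0) * (if r < s' then w s' * p s' r else 0) := by
      intro r
      rw [ha r, pow_two, Finset.sum_mul_sum]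
    rw [Finset.sum_congr rfl fun r _ => h1 r, Finset.sum_comm]
    refine Finset.sum_congr rfl fun s hs => ?_
    rw [Finset.sum_comm]
    refine Finset.sum_congr rfl fun s' hs' => ?_
    exact hE s hs s' hs'
  have hdiag : ∀ s ∈ I,
      (∑ r ∈ Finset.range (min s s), (w s * p s r) * (w s * p s r)) ≤ w s ^ 2 := by
    intro s hs
    rw [min_self]
    have h2 : (∑ r ∈ Finset.range s, (w s * p s r) * (w s * p s r))
        = w s ^ 2 * ∑ r ∈ Finset.range s, p s r ^ 2 := by
      rw [Finset.mul_sum]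
      exact Finset.sum_congr rfl fun r _ => by ring
    rw [h2]
    calc w s ^ 2 * ∑ r ∈ Finset.range s, p s r ^ 2 ≤ w s ^ 2 * 1 :=
          mul_le_mul_of_nonneg_left (hsq_le_one s hs) (sq_nonneg _)
      _ = w s ^ 2 := mul_one _
  have hoff : ∀ s ∈ I, ∀ s' ∈ I, s' < s →
      (∑ r ∈ Finset.range (min s s'), (w s * p s r) * (w s' * p s' r))
        ≤ w s * w s' * ∑ r ∈ Finset.range s', p s' r ^ 2 := by
    intro s hs s' hs' hlt
    rw [min_eq_right (le_of_lt hlt), Finset.mul_sum]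
    refine Finset.sum_le_sum fun r hr => ?_
    have hrr : r < s' := Finset.mem_range.mp hr
    have hmono := hp_mono s' s (hIle s' hs').1 (le_of_lt hlt) (hIle s hs).2 r hrr
    have hp1 : 0 ≤ p s' r := hp_nonneg s' hs' r hrr
    have hw1 : 0 ≤ w s := hw s hs
    have hw2 : 0 ≤ w s' := hw s' hs'
    calc (w s * p s r) * (w s' * p s' r) = (w s * w s') * (p s r * p s' r) := by ring
      _ ≤ (w s * w s') * (p s' r * p s' r) :=
          mul_le_mul_of_nonneg_left (mul_le_mul_of_nonneg_right hmono hp1)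
            (mul_nonneg hw1 hw2)
      _ = w s * w s' * p s' r ^ 2 := by ring
  have hIco : ∀ s ∈ I, I.filter (fun s' => s' < s) = Finset.Ico t₀ s := by
    intro s hs
    ext x
    simp only [Finset.mem_filter, hI, Finset.mem_Icc, Finset.mem_Ico]
    constructor
    · rintro ⟨⟨h1, _⟩, h3⟩; exact ⟨h1, h3⟩
    · rintro ⟨h1, h2⟩; exact ⟨⟨h1, le_trans (le_of_lt h2) (hIle s hs).2⟩, h2⟩
  have htri : A ≤ W + S + S := by
    rw [hArep]
    have hsplit3 : (∑ s ∈ I, ∑ s' ∈ I,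
        ∑ r ∈ Finset.range (min s s'), (w s * p s r) * (w s' * p s' r))
        = (∑ s ∈ I, ∑ s' ∈ I, if s' = s then
            ∑ r ∈ Finset.range (min s s'), (w s * p s r) * (w s' * p s' r) else 0)
          + (∑ s ∈ I, ∑ s' ∈ I, if s' < s then
            ∑ r ∈ Finset.range (min s s'), (w s * p s r) * (w s' * p s' r) else 0)
          + (∑ s ∈ I, ∑ s' ∈ I, if s < s' then
            ∑ r ∈ Finset.range (min s s'), (w s * p s r) * (w s' * p s' r) else 0) := by
      simp only [← Finset.sum_add_distrib]
      refine Finset.sum_congr rfl fun s _ => Finset.sum_congr rfl fun s' _ => ?_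
      rcases lt_trichotomy s' s with h | h | h
      · rw [if_neg (Nat.ne_of_lt h), if_pos h, if_neg (Nat.lt_asymm h)]; ring
      · rw [if_pos h, if_neg (h ▸ lt_irrefl s'), if_neg (h ▸ lt_irrefl s')]; ring
      · rw [if_neg (Nat.ne_of_gt h), if_neg (Nat.lt_asymm h), if_pos h]; ring
    rw [hsplit3]
    have hb1 : (∑ s ∈ I, ∑ s' ∈ I, if s' = s then
        ∑ r ∈ Finset.range (min s s'), (w s * p s r) * (w s' * p s' r) else 0) ≤ W := by
      rw [hWdef]
      refine Finset.sum_le_sum fun s hs => ?_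
      rw [Finset.sum_ite_eq' I s
        (fun s' => ∑ r ∈ Finset.range (min s s'), (w s * p s r) * (w s' * p s' r)),
        if_pos hs]
      exact hdiag s hs
    have hb2 : (∑ s ∈ I, ∑ s' ∈ I, if s' < s then
        ∑ r ∈ Finset.range (min s s'), (w s * p s r) * (w s' * p s' r) else 0) ≤ S := by
      rw [hSdef]
      refine Finset.sum_le_sum fun s hs => ?_
      rw [← Finset.sum_filter, hIco s hs]
      refine Finset.sum_le_sum fun s' hs' => ?_
      have hs'lt : s' < s := (Finset.mem_Ico.mp hs').2
      have hs'I : s' ∈ I := by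
        rw [hI, Finset.mem_Icc]
        exact ⟨(Finset.mem_Ico.mp hs').1, le_trans (le_of_lt hs'lt) (hIle s hs).2⟩
      exact hoff s hs s' hs'I hs'lt
    have hb3 : (∑ s ∈ I, ∑ s' ∈ I, if s < s' then
        ∑ r ∈ Finset.range (min s s'), (w s * p s r) * (w s' * p s' r) else 0) ≤ S := by
      rw [Finset.sum_comm, hSdef]
      refine Finset.sum_le_sum fun s hs => ?_
      rw [← Finset.sum_filter, hIco s hs]
      refine Finset.sum_le_sum fun s' hs' => ?_
      have hs'lt : s' < s := (Finset.mem_Ico.mp hs').2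
      have hs'I : s' ∈ I := by
        rw [hI, Finset.mem_Icc]
        exact ⟨(Finset.mem_Ico.mp hs').1, le_trans (le_of_lt hs'lt) (hIle s hs).2⟩
      have hb := hoff s hs s' hs'I hs'lt
      calc (∑ r ∈ Finset.range (min s' s), (w s' * p s' r) * (w s * p s r))
          = ∑ r ∈ Finset.range (min s s'), (w s * p s r) * (w s' * p s' r) := by
            rw [min_comm]
            exact Finset.sum_congr rfl fun r _ => by ring
        _ ≤ w s * w s' * ∑ r ∈ Finset.range s', p s' r ^ 2 := hb
    linarith
  have hXrep : X = ∑ r ∈ Finset.range t, (if r ∈ I then w r else 0) * a r := by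
    rw [hXdef]
    have h1 : ∀ q ∈ T, c q * (if q.2 ∈ I then w q.2 else 0)
        = ∑ r ∈ Finset.range t, if q.2 = r then c q * (if r ∈ I then w r else 0) else 0 := by
      intro q hq
      rw [Finset.sum_ite_eq (Finset.range t) q.2
        (fun r => c q * (if r ∈ I then w r else 0)), if_pos (hsndT q hq)]
    rw [Finset.sum_congr rfl h1, Finset.sum_comm]
    refine Finset.sum_congr rfl fun r _ => ?_
    have h2 : ∀ q ∈ T, (if q.2 = r then c q * (if r ∈ I then w r else 0) else 0)
        = (if r ∈ I then w r else 0) * (if q.2 = r then c q else 0) := by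
      intro q _
      by_cases h : q.2 = r
      · rw [if_pos h, if_pos h]; ring
      · rw [if_neg h, if_neg h, mul_zero]
    rw [Finset.sum_congr rfl h2, ← Finset.mul_sum, hadef]
  have hwsq : (∑ r ∈ Finset.range t, (if r ∈ I then w r else 0) ^ 2) ≤ W := by
    have h1 : ∀ r ∈ Finset.range t, (if r ∈ I then w r else 0) ^ 2
        = if r ∈ I then w r ^ 2 else 0 := by
      intro r _
      by_cases h : r ∈ I
      · rw [if_pos h, if_pos h]
      · rw [if_neg h, if_neg h]; ring
    rw [Finset.sum_congr rfl h1, ← Finset.sum_filter, hWdef]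
    refine Finset.sum_le_sum_of_subset_of_nonneg ?_ fun s _ _ => sq_nonneg _
    intro x hx
    exact (Finset.mem_filter.mp hx).2
  have hXA : X ^ 2 ≤ W * A := by
    rw [hXrep]
    calc (∑ r ∈ Finset.range t, (if r ∈ I then w r else 0) * a r) ^ 2
        ≤ (∑ r ∈ Finset.range t, (if r ∈ I then w r else 0) ^ 2)
          * ∑ r ∈ Finset.range t, a r ^ 2 :=
          Finset.sum_mul_sq_le_sq_mul_sq (Finset.range t) _ _
      _ ≤ W * A := by
          rw [hAdef]
          exact mul_le_mul_of_nonneg_right hwsq hA0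
  -- final inequality
  have hsig0 : 0 ≤ σ2 := le_trans (by linarith) hsig
  have h2cX : cvu * X + cvu * X ≤ vv * A + vu * W := by
    have hprod : (cvu * X) ^ 2 ≤ (vv * A) * (vu * W) := by
      have h1 : (cvu * X) ^ 2 = cvu ^ 2 * X ^ 2 := by ring
      rw [h1]
      calc cvu ^ 2 * X ^ 2 ≤ (vv * vu) * (W * A) :=
            mul_le_mul hc hXA (sq_nonneg _) (mul_nonneg hvv hvu)
        _ = (vv * A) * (vu * W) := by ring
    have hva : 0 ≤ vv * A := mul_nonneg hvv hA0
    have hvw : 0 ≤ vu * W := mul_nonneg hvu hW0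
    nlinarith [sq_nonneg (vv * A - vu * W), sq_nonneg (vv * A + vu * W - 2 * (cvu * X))]
  have hfinal : vv * W + vu * A + eta * P + cvu * X + cvu * X
      ≤ 4 * σ2 * W + 2 * σ2 * S := by
    have e1 : eta * P ≤ eta * W := mul_le_mul_of_nonneg_left hPW heta
    have e2 : (vv + vu + eta) * W ≤ σ2 * W := mul_le_mul_of_nonneg_right hsig hW0
    have e3 : (vv + vu + eta) * A ≤ σ2 * A := mul_le_mul_of_nonneg_right hsig hA0
    have e4 : σ2 * A ≤ σ2 * (W + S + S) := mul_le_mul_of_nonneg_left htri hsig0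
    have e5 : 0 ≤ eta * A := mul_nonneg heta hA0
    have e6 : 0 ≤ σ2 * W := mul_nonneg hsig0 hW0
    nlinarith [e1, e2, e3, e4, e5, e6]
  calc (∑ q ∈ T, ∑ q' ∈ T, c q * c q' *
      ((if q.1 = q'.1 then vv else 0) + (if q.2 = q'.2 then vu else 0)
        + (if q.1 = q'.1 ∧ q.2 = q'.2 then eta else 0)
        + (if q.1 = q'.2 then cvu else 0) + (if q.2 = q'.1 then cvu else 0)))
      = vv * W + vu * A + eta * P + cvu * X + cvu * X := hmain
    _ ≤ 4 * σ2 * W + 2 * σ2 * S := hfinal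
/-- Proposition 2: general variance bound for incrementally sampled FI
estimators. -/
theorem incremental_sampling_variance_bound {Ω α : Type*} [MeasurableSpace Ω]
    [MeasurableSpace α] (μ : Measure Ω) [IsProbabilityMeasure μ]
    (Z : ℕ → Ω → α) (hmeas : ∀ i, Measurable (Z i))
    (hindep : iIndepFun Z μ)
    (hident : ∀ i, μ.map (Z i) = μ.map (Z 0))
    (f : α → α → ℝ) (hf : Measurable (Function.uncurry f))
    (hL2 : ∀ s r, MemLp (fun ω => f (Z s ω) (Z r ω)) 2 μ)
    (t₀ t : ℕ) (ht : t₀ ≤ t) (w : ℕ → ℝ) (p : ℕ → ℕ → ℝ) (σ2 : ℝ)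
    (hw : ∀ s ∈ Finset.Icc t₀ t, 0 ≤ w s)
    (hwsum : ∑ s ∈ Finset.Icc t₀ t, w s ≤ 1)
    (hp_nonneg : ∀ s ∈ Finset.Icc t₀ t, ∀ r < s, 0 ≤ p s r)
    (hp_sum : ∀ s ∈ Finset.Icc t₀ t, ∑ r ∈ Finset.range s, p s r = 1)
    (hp_mono : ∀ s' s, t₀ ≤ s' → s' ≤ s → s ≤ t → ∀ r < s', p s r ≤ p s' r)
    (hcov : ∀ s ∈ Finset.Icc t₀ t, ∀ s' ∈ Finset.Icc t₀ t,
      ∀ r < s, ∀ r' < s',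
        |covar μ (fun ω => f (Z s ω) (Z r ω))
          (fun ω => f (Z s' ω) (Z r' ω))| ≤ σ2) :
    variance (fun ω => ∑ s ∈ Finset.Icc t₀ t,
        w s * ∑ r ∈ Finset.range s, p s r * f (Z s ω) (Z r ω)) μ ≤
      4 * σ2 * (∑ s ∈ Finset.Icc t₀ t, (w s) ^ 2) +
        2 * σ2 * ∑ s ∈ Finset.Icc t₀ t, ∑ s' ∈ Finset.Ico t₀ s,
          w s * w s' * ∑ r ∈ Finset.range s', (p s' r) ^ 2 := by
  classical
  have ht₀mem : t₀ ∈ Finset.Icc t₀ t := Finset.mem_Icc.mpr ⟨le_refl _, ht⟩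
  have ht₀pos : 0 < t₀ := by
    rcases Nat.eq_zero_or_pos t₀ with h0 | hpos
    · exfalso
      have hcontra := hp_sum t₀ ht₀mem
      rw [h0] at hcontra
      simp at hcontra
    · exact hpos
  set ν : Measure α := μ.map (Z 0) with hνdef
  haveI : IsProbabilityMeasure ν := Measure.isProbabilityMeasure_map (hmeas 0).aemeasurable
  have hν : ∀ i, μ.map (Z i) = ν := hident
  -- L² of f over ν ⊗ ν
  have fL2 : MemLp (Function.uncurry f) 2 (ν.prod ν) := by
    rw [← pair_law hmeas hindep hν (one_ne_zero : (1:ℕ) ≠ 0)]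
    exact (memLp_map_measure_iff hf.aestronglyMeasurable
      ((hmeas 1).prodMk (hmeas 0)).aemeasurable).mpr (hL2 1 0)
  have fInt : Integrable (Function.uncurry f) (ν.prod ν) := fL2.integrable one_le_two
  set m : ℝ := ∫ q, Function.uncurry f q ∂(ν.prod ν) with hmdef
  set v : α → ℝ := fun x => (∫ y, f x y ∂ν) - m with hvdef
  set u : α → ℝ := fun y => (∫ x, f x y ∂ν) - m with hudef
  set k : α → α → ℝ := fun x y => f x y - v x - u y - m with hkdef
  have hdecomp : ∀ x y, f x y - m = v x + u y + k x y := by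
    intro x y
    simp only [hkdef]
    ring
  -- measurability
  have hvim : StronglyMeasurable fun x => ∫ y, f x y ∂ν :=
    hf.stronglyMeasurable.integral_prod_right'
  have huim : StronglyMeasurable fun y => ∫ x, f x y ∂ν :=
    hf.stronglyMeasurable.integral_prod_left'
  have hvm : Measurable v := hvim.measurable.sub measurable_const
  have hum : Measurable u := huim.measurable.sub measurable_const
  have hkm : Measurable (Function.uncurry k) := by
    have hrw : Function.uncurry k
        = fun q : α × α => Function.uncurry f q - v q.1 - u q.2 - m := rfl
    rw [hrw]
    exact ((hf.sub (hvm.comp measurable_fst)).sub (hum.comp measurable_snd)).sub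
      measurable_const
  -- L² facts
  have hv2 : MemLp v 2 ν := (margL2 hf fL2).sub (memLp_const m)
  have hswapL2 : MemLp (fun q : α × α => f q.2 q.1) 2 (ν.prod ν) :=
    fL2.comp_measurePreserving Measure.measurePreserving_swap
  have hu2 : MemLp u 2 ν :=
    (margL2 (hf.comp measurable_swap) hswapL2).sub (memLp_const m)
  have hk2 : MemLp (Function.uncurry k) 2 (ν.prod ν) :=
    ((fL2.sub (hv2.comp_measurePreserving fst_mp)).sub
      (hu2.comp_measurePreserving snd_mp)).sub (memLp_const m)
  have hintu : Integrable u ν := hu2.integrable one_le_two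
  have hintv : Integrable v ν := hv2.integrable one_le_two
  -- mean-zero of marginals
  have hv0 : ∫ x, v x ∂ν = 0 := by
    have hint1 : Integrable (fun x => ∫ y, f x y ∂ν) ν := fInt.integral_prod_left
    have h1 : ∫ x, v x ∂ν = (∫ x, (∫ y, f x y ∂ν) ∂ν) - m := by
      simp only [hvdef]
      rw [integral_sub hint1 (integrable_const m), integral_const, probReal_univ, one_smul]
    rw [h1, hmdef, integral_prod _ fInt]
    exact sub_eq_zero.mpr rfl
  have hu0 : ∫ y, u y ∂ν = 0 := by
    have hint1 : Integrable (fun y => ∫ x, f x y ∂ν) ν := fInt.integral_prod_right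
    have h1 : ∫ y, u y ∂ν = (∫ y, (∫ x, f x y ∂ν) ∂ν) - m := by
      simp only [hudef]
      rw [integral_sub hint1 (integrable_const m), integral_const, probReal_univ, one_smul]
    rw [h1, hmdef, integral_prod_symm _ fInt]
    exact sub_eq_zero.mpr rfl
  -- a.e. centering of k
  have hsec2 : ∀ᵐ x ∂ν, Integrable (fun y => f x y) ν :=
    ((integrable_prod_iff fInt.aestronglyMeasurable).mp fInt).1
  have hswapInt : Integrable (fun q : α × α => f q.2 q.1) (ν.prod ν) :=
    hswapL2.integrable one_le_two
  have hsec1 : ∀ᵐ y ∂ν, Integrable (fun x => f x y) ν :=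
    ((integrable_prod_iff hswapInt.aestronglyMeasurable).mp hswapInt).1
  have hcent2 : ∀ᵐ x ∂ν, ∫ y, k x y ∂ν = 0 := by
    filter_upwards [hsec2] with x hx
    have h1 : ∫ y, k x y ∂ν = (∫ y, f x y ∂ν) - v x - (∫ y, u y ∂ν) - m := by
      simp only [hkdef]
      have i1 : Integrable (fun y => f x y - v x) ν := hx.sub (integrable_const (v x))
      have i2 : Integrable (fun y => f x y - v x - u y) ν := i1.sub hintu
      rw [integral_sub i2 (integrable_const m), integral_sub i1 hintu,
        integral_sub hx (integrable_const (v x)), integral_const, integral_const,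
        probReal_univ, one_smul, one_smul]
    rw [h1, hu0]
    simp only [hvdef]
    ring
  have hcent1 : ∀ᵐ y ∂ν, ∫ x, k x y ∂ν = 0 := by
    filter_upwards [hsec1] with y hy
    have h1 : ∫ x, k x y ∂ν = (∫ x, f x y ∂ν) - (∫ x, v x ∂ν) - u y - m := by
      simp only [hkdef]
      have i1 : Integrable (fun x => f x y - v x) ν := hy.sub hintv
      have i2 : Integrable (fun x => f x y - v x - u y) ν := i1.sub (integrable_const (u y))
      rw [integral_sub i2 (integrable_const m), integral_sub i1 (integrable_const (u y)),
        integral_sub hy hintv, integral_const, integral_const,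
        probReal_univ, one_smul, one_smul]
    rw [h1, hv0]
    simp only [hudef]
    ring
  -- the four scalar quantities
  set Vv : ℝ := ∫ x, v x ^ 2 ∂ν with hVvdef
  set Vu : ℝ := ∫ x, u x ^ 2 ∂ν with hVudef
  set Et : ℝ := ∫ q : α × α, k q.1 q.2 ^ 2 ∂(ν.prod ν) with hEtdef
  set Cv : ℝ := ∫ x, v x * u x ∂ν with hCvdef
  have hVv0 : 0 ≤ Vv := integral_nonneg fun x => sq_nonneg _
  have hVu0 : 0 ≤ Vu := integral_nonneg fun x => sq_nonneg _
  have hEt0 : 0 ≤ Et := integral_nonneg fun q => sq_nonneg _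
  have hCuv : ∫ x, u x * v x ∂ν = Cv := by
    rw [hCvdef]
    exact integral_congr_ae (Filter.Eventually.of_forall fun x => mul_comm _ _)
  -- Cauchy-Schwarz for Cv
  have hIu2 : Integrable (fun x => u x ^ 2) ν := by
    have := (memLp_two_iff_integrable_sq hu2.aestronglyMeasurable).mp hu2
    simpa [Pi.pow_apply] using this
  have hIv2 : Integrable (fun x => v x ^ 2) ν := by
    have := (memLp_two_iff_integrable_sq hv2.aestronglyMeasurable).mp hv2
    simpa [Pi.pow_apply] using this
  have hIvu : Integrable (fun x => v x * u x) ν := memL2_mul_integrable hv2 hu2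
  have hCS : Cv ^ 2 ≤ Vv * Vu := by
    have hq : ∀ lam : ℝ, 0 ≤ Vu * (lam * lam) + (2 * Cv) * lam + Vv := by
      intro lam
      have h0 : 0 ≤ ∫ x, (lam * u x + v x) ^ 2 ∂ν := integral_nonneg fun x => sq_nonneg _
      have hexp : ∫ x, (lam * u x + v x) ^ 2 ∂ν
          = Vu * (lam * lam) + (2 * Cv) * lam + Vv := by
        have e : (fun x => (lam * u x + v x) ^ 2)
            = fun x => ((lam * lam) * u x ^ 2 + (2 * lam) * (v x * u x)) + v x ^ 2 :=
          funext fun x => by ring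
        rw [e]
        have i1 : Integrable (fun x => (lam * lam) * u x ^ 2) ν := hIu2.const_mul _
        have i2 : Integrable (fun x => (2 * lam) * (v x * u x)) ν := hIvu.const_mul _
        have i12 : Integrable
            (fun x => (lam * lam) * u x ^ 2 + (2 * lam) * (v x * u x)) ν := i1.add i2
        rw [integral_add i12 hIv2, integral_add i1 i2, integral_const_mul,
          integral_const_mul, hVudef, hCvdef, hVvdef]
        ring
      linarith [hexp ▸ h0]
    have hd := discrim_le_zero hq
    rw [discrim] at hd
    nlinarith [hd]
  -- key covariance values
  have key : ∀ s r s' r' : ℕ, r < s → r' < s' →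
      ∫ ω, (f (Z s ω) (Z r ω) - m) * (f (Z s' ω) (Z r' ω) - m) ∂μ
        = (if s = s' then Vv else 0) + (if r = r' then Vu else 0)
          + (if s = s' ∧ r = r' then Et else 0)
          + (if s = r' then Cv else 0) + (if r = s' then Cv else 0) := by
    intro s r s' r' hrs hrs'
    have hkp := key_product hmeas hindep hν v u k hvm hum hkm hv2 hu2 hk2 hv0 hu0
      hcent1 hcent2 s r s' r' hrs hrs'
    have he : (fun ω => (f (Z s ω) (Z r ω) - m) * (f (Z s' ω) (Z r' ω) - m))
        = fun ω => (v (Z s ω) + u (Z r ω) + k (Z s ω) (Z r ω)) *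
            (v (Z s' ω) + u (Z r' ω) + k (Z s' ω) (Z r' ω)) := by
      funext ω
      rw [hdecomp (Z s ω) (Z r ω), hdecomp (Z s' ω) (Z r' ω)]
    rw [he, hkp, hCuv, hVvdef, hVudef, hEtdef, hCvdef]
  -- σ2 dominates the total second moment
  have hEf : ∀ a b : ℕ, a ≠ b → ∫ ω, f (Z a ω) (Z b ω) ∂μ = m := by
    intro a b hab
    exact (int_pair hmeas hindep hν hab (Function.uncurry f)
      hf.aestronglyMeasurable).trans hmdef.symm
  have hsig : Vv + Vu + Et ≤ σ2 := by
    have hXX := hcov t₀ ht₀mem t₀ ht₀mem 0 ht₀pos 0 ht₀pos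
    have hne : t₀ ≠ 0 := Nat.pos_iff_ne_zero.mp ht₀pos
    have hca : covar μ (fun ω => f (Z t₀ ω) (Z 0 ω)) (fun ω => f (Z t₀ ω) (Z 0 ω))
        = Vv + Vu + Et := by
      unfold covar
      rw [hEf t₀ 0 hne]
      have hk0 := key t₀ 0 t₀ 0 ht₀pos ht₀pos
      rw [hk0, if_pos rfl, if_pos rfl, if_pos ⟨rfl, rfl⟩, if_neg hne,
        if_neg (fun hh => hne hh.symm)]
      ring
    calc Vv + Vu + Et = covar μ _ _ := hca.symm
      _ ≤ |covar μ _ _| := le_abs_self _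
      _ ≤ σ2 := hXX
  -- now the variance computation
  set I : Finset ℕ := Finset.Icc t₀ t with hIdef
  set T : Finset (Σ _ : ℕ, ℕ) := I.sigma fun s => Finset.range s with hTdef
  set c : (Σ _ : ℕ, ℕ) → ℝ := fun q => w q.1 * p q.1 q.2 with hcdef
  have hmemT : ∀ q : (Σ _ : ℕ, ℕ), q ∈ T → q.1 ∈ I ∧ q.2 < q.1 := by
    intro q hq
    rw [hTdef, Finset.mem_sigma] at hq
    exact ⟨hq.1, Finset.mem_range.mp hq.2⟩
  have hfun : (fun ω => ∑ s ∈ I, w s * ∑ r ∈ Finset.range s, p s r * f (Z s ω) (Z r ω))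
      = fun ω => ∑ q ∈ T, c q * f (Z q.1 ω) (Z q.2 ω) := by
    funext ω
    rw [hTdef, Finset.sum_sigma]
    refine Finset.sum_congr rfl fun s hs => ?_
    rw [Finset.mul_sum]
    refine Finset.sum_congr rfl fun r hr => ?_
    simp only [hcdef]
    ring
  rw [hfun]
  -- MemLp of the sum
  have hF2 : MemLp (fun ω => ∑ q ∈ T, c q * f (Z q.1 ω) (Z q.2 ω)) 2 μ := by
    have h1 := memLp_finset_sum' T
      (f := fun q => fun ω => c q * f (Z q.1 ω) (Z q.2 ω))
      (fun q _ => (hL2 q.1 q.2).const_mul (c q))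
    have h2 : (∑ q ∈ T, fun ω => c q * f (Z q.1 ω) (Z q.2 ω))
        = fun ω => ∑ q ∈ T, c q * f (Z q.1 ω) (Z q.2 ω) := by
      funext ω
      simp [Finset.sum_apply]
    rwa [h2] at h1
  -- expectation of the sum
  have hcsum : ∑ q ∈ T, c q = ∑ s ∈ I, w s := by
    rw [hTdef, Finset.sum_sigma]
    refine Finset.sum_congr rfl fun s hs => ?_
    simp only [hcdef]
    rw [← Finset.mul_sum, hp_sum s hs, mul_one]
  have hEF : ∫ ω, (∑ q ∈ T, c q * f (Z q.1 ω) (Z q.2 ω)) ∂μ = m * ∑ s ∈ I, w s := by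
    rw [integral_finset_sum T (fun q hq =>
      ((hL2 q.1 q.2).integrable one_le_two).const_mul (c q))]
    have h1 : ∀ q ∈ T, ∫ ω, c q * f (Z q.1 ω) (Z q.2 ω) ∂μ = c q * m := by
      intro q hq
      rw [integral_const_mul, hEf q.1 q.2 (Nat.ne_of_gt (hmemT q hq).2)]
    rw [Finset.sum_congr rfl h1, ← Finset.sum_mul, hcsum]
    ring
  -- second moment of the sum
  have hIff : ∀ (q q' : Σ _ : ℕ, ℕ), Integrable
      (fun ω => f (Z q.1 ω) (Z q.2 ω) * f (Z q'.1 ω) (Z q'.2 ω)) μ := fun q q' =>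
    memL2_mul_integrable (hL2 q.1 q.2) (hL2 q'.1 q'.2)
  have hFsq : ∫ ω, (∑ q ∈ T, c q * f (Z q.1 ω) (Z q.2 ω)) ^ 2 ∂μ
      = ∑ q ∈ T, ∑ q' ∈ T, c q * c q' *
          ∫ ω, f (Z q.1 ω) (Z q.2 ω) * f (Z q'.1 ω) (Z q'.2 ω) ∂μ := by
    have e : (fun ω => (∑ q ∈ T, c q * f (Z q.1 ω) (Z q.2 ω)) ^ 2)
        = fun ω => ∑ q ∈ T, ∑ q' ∈ T, c q * c q' *
            (f (Z q.1 ω) (Z q.2 ω) * f (Z q'.1 ω) (Z q'.2 ω)) := by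
      funext ω
      rw [pow_two, Finset.sum_mul_sum]
      exact Finset.sum_congr rfl fun q _ => Finset.sum_congr rfl fun q' _ => by ring
    rw [e]
    rw [integral_finset_sum T (fun q hq => integrable_finset_sum T
      (fun q' hq' => (hIff q q').const_mul (c q * c q')))]
    refine Finset.sum_congr rfl fun q hq => ?_
    rw [integral_finset_sum T (fun q' hq' => (hIff q q').const_mul (c q * c q'))]
    refine Finset.sum_congr rfl fun q' hq' => ?_
    rw [integral_const_mul]
  -- per-term values
  have hterm : ∀ q ∈ T, ∀ q' ∈ T,
      ∫ ω, f (Z q.1 ω) (Z q.2 ω) * f (Z q'.1 ω) (Z q'.2 ω) ∂μ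
        = ((if q.1 = q'.1 then Vv else 0) + (if q.2 = q'.2 then Vu else 0)
          + (if q.1 = q'.1 ∧ q.2 = q'.2 then Et else 0)
          + (if q.1 = q'.2 then Cv else 0) + (if q.2 = q'.1 then Cv else 0)) + m * m := by
    intro q hq q' hq'
    have hk := key q.1 q.2 q'.1 q'.2 (hmemT q hq).2 (hmemT q' hq').2
    have hexp : (fun ω => (f (Z q.1 ω) (Z q.2 ω) - m) * (f (Z q'.1 ω) (Z q'.2 ω) - m))
        = fun ω => (f (Z q.1 ω) (Z q.2 ω) * f (Z q'.1 ω) (Z q'.2 ω)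
            - m * f (Z q.1 ω) (Z q.2 ω) - m * f (Z q'.1 ω) (Z q'.2 ω)) + m * m :=
      funext fun ω => by ring
    rw [hexp] at hk
    have i1 : Integrable (fun ω => m * f (Z q.1 ω) (Z q.2 ω)) μ :=
      ((hL2 q.1 q.2).integrable one_le_two).const_mul m
    have i2 : Integrable (fun ω => m * f (Z q'.1 ω) (Z q'.2 ω)) μ :=
      ((hL2 q'.1 q'.2).integrable one_le_two).const_mul m
    have i3 : Integrable (fun ω => f (Z q.1 ω) (Z q.2 ω) * f (Z q'.1 ω) (Z q'.2 ω)
        - m * f (Z q.1 ω) (Z q.2 ω)) μ := (hIff q q').sub i1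
    have i4 : Integrable (fun ω => f (Z q.1 ω) (Z q.2 ω) * f (Z q'.1 ω) (Z q'.2 ω)
        - m * f (Z q.1 ω) (Z q.2 ω) - m * f (Z q'.1 ω) (Z q'.2 ω)) μ := i3.sub i2
    rw [integral_add i4 (integrable_const (m * m)), integral_sub i3 i2,
      integral_sub (hIff q q') i1, integral_const_mul, integral_const_mul,
      hEf q.1 q.2 (Nat.ne_of_gt (hmemT q hq).2),
      hEf q'.1 q'.2 (Nat.ne_of_gt (hmemT q' hq').2),
      integral_const, probReal_univ, one_smul] at hk
    linarith [hk]
  -- variance identity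
  have hvar : variance (fun ω => ∑ q ∈ T, c q * f (Z q.1 ω) (Z q.2 ω)) μ
      = ∑ q ∈ T, ∑ q' ∈ T, c q * c q' *
          ((if q.1 = q'.1 then Vv else 0) + (if q.2 = q'.2 then Vu else 0)
            + (if q.1 = q'.1 ∧ q.2 = q'.2 then Et else 0)
            + (if q.1 = q'.2 then Cv else 0) + (if q.2 = q'.1 then Cv else 0)) := by
    rw [variance_eq_sub hF2]
    have h1 : ∫ ω, ((fun ω => ∑ q ∈ T, c q * f (Z q.1 ω) (Z q.2 ω)) ^ 2) ω ∂μ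
        = ∫ ω, (∑ q ∈ T, c q * f (Z q.1 ω) (Z q.2 ω)) ^ 2 ∂μ := by
      refine integral_congr_ae (Filter.Eventually.of_forall fun ω => ?_)
      simp [Pi.pow_apply]
    rw [h1, hFsq, hEF]
    rw [Finset.sum_congr rfl fun q hq => Finset.sum_congr rfl
      fun q' hq' => by rw [hterm q hq q' hq']]
    have h2 : ∑ q ∈ T, ∑ q' ∈ T, c q * c q' *
        (((if q.1 = q'.1 then Vv else 0) + (if q.2 = q'.2 then Vu else 0)
          + (if q.1 = q'.1 ∧ q.2 = q'.2 then Et else 0)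
          + (if q.1 = q'.2 then Cv else 0) + (if q.2 = q'.1 then Cv else 0)) + m * m)
        = (∑ q ∈ T, ∑ q' ∈ T, c q * c q' *
            ((if q.1 = q'.1 then Vv else 0) + (if q.2 = q'.2 then Vu else 0)
              + (if q.1 = q'.1 ∧ q.2 = q'.2 then Et else 0)
              + (if q.1 = q'.2 then Cv else 0) + (if q.2 = q'.1 then Cv else 0)))
          + (∑ q ∈ T, c q) * (∑ q ∈ T, c q) * (m * m) := by
      simp only [mul_add, Finset.sum_add_distrib]
      congr 1
      have h3 : ∀ q ∈ T, (∑ q' ∈ T, c q * c q' * (m * m))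
          = c q * ((∑ q' ∈ T, c q') * (m * m)) := by
        intro q _
        rw [Finset.sum_mul, Finset.mul_sum]
        exact Finset.sum_congr rfl fun q' _ => by ring
      rw [Finset.sum_congr rfl h3, ← Finset.sum_mul]
      ring
    rw [h2, hcsum]
    ring
  rw [hvar]
  exact final_algebra t₀ t ht w p hw hp_nonneg hp_sum hp_mono Vv Vu Et Cv σ2
    hVv0 hVu0 hEt0 hCS hsig
end

section
/- With X^{(age)} ∼ Uniform([20,80]) and X^{(salary)} ∼ Uniform([20,150]) independent, and the classification function of the agrawal concept 1 (class A iff (age<40 ∧ 50≤salary≤100) ∨ (40≤age<60 ∧ 75≤salary≤125) ∨ (age≥60 ∧ 25≤salary≤75)), the permutation feature importance of the salary feature — defined as P(class(X^{(age)}, X̃^{(salary)}) ≠ class(X^{(age)}, X^{(salary)})) for an independent copy X̃^{(salary)} of the salary feature — equals 3·((5/39)·(8/13) + (8/13)·(1/3)·(5/13)) = 240/507. -/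
open MeasureTheory Set

/-- Uniform distribution of the `age` feature on `[20, 80]`. -/
noncomputable def ageMeasure : Measure ℝ :=
  ((60 : ENNReal))⁻¹ • (volume.restrict (Set.Icc (20 : ℝ) 80))

/-- Uniform distribution of the `salary` feature on `[20, 150]`. -/
noncomputable def salaryMeasure : Measure ℝ :=
  ((130 : ENNReal))⁻¹ • (volume.restrict (Set.Icc (20 : ℝ) 150))

/-- Classification function of the agrawal stream, concept 1. -/
def agrawalClassA (age salary : ℝ) : Prop :=
  (age < 40 ∧ 50 ≤ salary ∧ salary ≤ 100) ∨
    (40 ≤ age ∧ age < 60 ∧ 75 ≤ salary ∧ salary ≤ 125) ∨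
    (60 ≤ age ∧ 25 ≤ salary ∧ salary ≤ 75)

instance : SFinite salaryMeasure := by unfold salaryMeasure; infer_instance

lemma salary_Icc {a b : ℝ} (ha : 20 ≤ a) (hb : b ≤ 150) :
    salaryMeasure (Icc a b) = (130 : ENNReal)⁻¹ * ENNReal.ofReal (b - a) := by
  rw [salaryMeasure, Measure.smul_apply, Measure.restrict_apply measurableSet_Icc,
    inter_eq_left.mpr (Icc_subset_Icc ha hb), Real.volume_Icc, smul_eq_mul]

lemma salary_univ : salaryMeasure univ = 1 := by
  rw [salaryMeasure, Measure.smul_apply, Measure.restrict_apply MeasurableSet.univ,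
    univ_inter, Real.volume_Icc, smul_eq_mul]
  norm_num
  rw [ENNReal.inv_mul_cancel] <;> norm_num

lemma salary_Icc' {a b : ℝ} (ha : 20 ≤ a) (hb : b ≤ 150) (hab : b - a = 50) :
    salaryMeasure (Icc a b) = ENNReal.ofReal (5 / 13) := by
  rw [salary_Icc ha hb, hab,
    show ((130 : ENNReal))⁻¹ = ENNReal.ofReal (130 : ℝ)⁻¹ by
      rw [ENNReal.ofReal_inv_of_pos (by norm_num)]; norm_num,
    ← ENNReal.ofReal_mul (by positivity)]
  norm_num

lemma salary_compl {a b : ℝ} (ha : 20 ≤ a) (hb : b ≤ 150) (hab : b - a = 50) :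
    salaryMeasure (Icc a b)ᶜ = ENNReal.ofReal (8 / 13) := by
  rw [measure_compl measurableSet_Icc (by rw [salary_Icc' ha hb hab]; exact ENNReal.ofReal_ne_top),
    salary_univ, salary_Icc' ha hb hab, ← ENNReal.ofReal_one,
    ← ENNReal.ofReal_sub _ (by norm_num)]
  norm_num

lemma age_meas {s : Set ℝ} (hs : MeasurableSet s) (h : s ∩ Icc (20:ℝ) 80 = Icc 20 40 ∨
    s ∩ Icc (20:ℝ) 80 = Ico 40 60 ∨ s ∩ Icc (20:ℝ) 80 = Icc 60 80 ∨
    s ∩ Icc (20:ℝ) 80 = Ico 20 40) :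
    ageMeasure s = ENNReal.ofReal (1 / 3) := by
  have key : volume (s ∩ Icc (20:ℝ) 80) = ENNReal.ofReal 20 := by
    rcases h with h | h | h | h <;> rw [h] <;>
      simp [Real.volume_Icc, Real.volume_Ico] <;> norm_num
  rw [ageMeasure, Measure.smul_apply, Measure.restrict_apply hs, key, smul_eq_mul,
    show ((60 : ENNReal))⁻¹ = ENNReal.ofReal (60 : ℝ)⁻¹ by
      rw [ENNReal.ofReal_inv_of_pos (by norm_num)]; norm_num,
    ← ENNReal.ofReal_mul (by positivity)]
  norm_num

/-- The "flip" set for a salary interval `I`: original salary in `I` and permuted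
one outside, or vice versa. -/
def flipSet (I : Set ℝ) : Set (ℝ × ℝ) := (I ×ˢ Iᶜ) ∪ (Iᶜ ×ˢ I)

lemma classA_low {a x : ℝ} (h : a < 40) : agrawalClassA a x ↔ x ∈ Icc (50:ℝ) 100 := by
  simp only [agrawalClassA, mem_Icc]
  constructor
  · rintro (⟨_, hx⟩ | ⟨h', _⟩ | ⟨h', _⟩) <;> first | exact hx | linarith
  · exact fun hx => Or.inl ⟨h, hx⟩

lemma classA_mid {a x : ℝ} (h1 : 40 ≤ a) (h2 : a < 60) :
    agrawalClassA a x ↔ x ∈ Icc (75:ℝ) 125 := by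
  simp only [agrawalClassA, mem_Icc]
  constructor
  · rintro (⟨h', _⟩ | ⟨_, _, hx⟩ | ⟨h', _⟩) <;> first | exact hx | linarith
  · exact fun hx => Or.inr (Or.inl ⟨h1, h2, hx⟩)

lemma classA_high {a x : ℝ} (h : 60 ≤ a) : agrawalClassA a x ↔ x ∈ Icc (25:ℝ) 75 := by
  simp only [agrawalClassA, mem_Icc]
  constructor
  · rintro (⟨h', _⟩ | ⟨_, h', _⟩ | ⟨_, hx⟩) <;> first | exact hx | linarith
  · exact fun hx => Or.inr (Or.inr ⟨h, hx⟩)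

lemma flip_mem {I : Set ℝ} {s t : ℝ} :
    (s, t) ∈ flipSet I ↔ ¬((t ∈ I) ↔ (s ∈ I)) := by
  simp only [flipSet, mem_union, mem_prod, mem_compl_iff]
  tauto

lemma set_decomp :
    {z : ℝ × ℝ × ℝ | ¬(agrawalClassA z.1 z.2.2 ↔ agrawalClassA z.1 z.2.1)} =
      (Iio (40:ℝ) ×ˢ flipSet (Icc 50 100)) ∪ (Ico (40:ℝ) 60 ×ˢ flipSet (Icc 75 125)) ∪
        (Ici (60:ℝ) ×ˢ flipSet (Icc 25 75)) := by
  ext ⟨a, s, t⟩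
  simp only [mem_setOf_eq, mem_union, mem_prod, mem_Iio, mem_Ico, mem_Ici, flip_mem]
  rcases lt_or_ge a 40 with h | h
  · rw [classA_low h, classA_low h]
    constructor
    · exact fun hx => Or.inl (Or.inl ⟨h, hx⟩)
    · rintro ((⟨_, hx⟩ | ⟨⟨h', _⟩, _⟩) | ⟨h', _⟩) <;> first | exact hx | linarith
  · rcases lt_or_ge a 60 with h2 | h2
    · rw [classA_mid h h2, classA_mid h h2]
      constructor
      · exact fun hx => Or.inl (Or.inr ⟨⟨h, h2⟩, hx⟩)
      · rintro ((⟨h', _⟩ | ⟨_, hx⟩) | ⟨h', _⟩) <;> first | exact hx | linarith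
    · rw [classA_high h2, classA_high h2]
      constructor
      · exact fun hx => Or.inr ⟨h2, hx⟩
      · rintro ((⟨h', _⟩ | ⟨⟨_, h'⟩, _⟩) | ⟨_, hx⟩) <;> first | exact hx | linarith

lemma flipSet_measurable {I : Set ℝ} (hI : MeasurableSet I) : MeasurableSet (flipSet I) :=
  ((hI.prod hI.compl).union (hI.compl.prod hI))

lemma flip_measure {a b : ℝ} (ha : 20 ≤ a) (hb : b ≤ 150) (hab : b - a = 50) :
    (salaryMeasure.prod salaryMeasure) (flipSet (Icc a b)) =
      ENNReal.ofReal (2 * (5 / 13 * (8 / 13))) := by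
  rw [flipSet, measure_union ?disj ((measurableSet_Icc.compl).prod measurableSet_Icc),
    Measure.prod_prod, Measure.prod_prod, salary_Icc' ha hb hab, salary_compl ha hb hab,
    ← ENNReal.ofReal_mul (by positivity), ← ENNReal.ofReal_mul (by positivity),
    ← ENNReal.ofReal_add (by positivity) (by positivity)]
  · norm_num
  case disj =>
    exact Set.disjoint_left.mpr (by rintro ⟨x, y⟩ ⟨hx, _⟩ ⟨hx', _⟩; exact hx' hx)

/-- Ground-truth PFI (0-1 loss) of the salary feature for the agrawal stream:
the probability that replacing the salary by an independent copy flips the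
class. -/
theorem agrawal_salary_pfi :
    (ageMeasure.prod (salaryMeasure.prod salaryMeasure))
        {z : ℝ × ℝ × ℝ | ¬(agrawalClassA z.1 z.2.2 ↔ agrawalClassA z.1 z.2.1)} =
      ENNReal.ofReal (3 * ((5 / 39) * (8 / 13) + (8 / 13) * (1 / 3) * (5 / 13))) := by
  rw [set_decomp]
  have hm1 : MeasurableSet (Iio (40:ℝ) ×ˢ flipSet (Icc 50 100)) :=
    measurableSet_Iio.prod (flipSet_measurable measurableSet_Icc)
  have hm2 : MeasurableSet (Ico (40:ℝ) 60 ×ˢ flipSet (Icc 75 125)) :=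
    measurableSet_Ico.prod (flipSet_measurable measurableSet_Icc)
  have hm3 : MeasurableSet (Ici (60:ℝ) ×ˢ flipSet (Icc 25 75)) :=
    measurableSet_Ici.prod (flipSet_measurable measurableSet_Icc)
  rw [measure_union ?d3 hm3, measure_union ?d2 hm2, Measure.prod_prod, Measure.prod_prod,
    Measure.prod_prod, flip_measure (by norm_num) (by norm_num) (by norm_num),
    flip_measure (by norm_num) (by norm_num) (by norm_num),
    flip_measure (by norm_num) (by norm_num) (by norm_num),
    age_meas measurableSet_Iio (Or.inr (Or.inr (Or.inr (by
      ext x; simp only [mem_inter_iff, mem_Iio, mem_Icc, mem_Ico]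
      constructor
      · rintro ⟨h1, h2, h3⟩; exact ⟨h2, h1⟩
      · rintro ⟨h1, h2⟩; exact ⟨h2, h1, by linarith⟩)))),
    age_meas measurableSet_Ico (Or.inr (Or.inl (by
      ext x; simp only [mem_inter_iff, mem_Icc, mem_Ico]
      constructor
      · rintro ⟨⟨h1, h2⟩, _⟩; exact ⟨h1, h2⟩
      · rintro ⟨h1, h2⟩; exact ⟨⟨h1, h2⟩, by linarith, by linarith⟩))),
    age_meas measurableSet_Ici (Or.inr (Or.inr (Or.inl (by
      ext x; simp only [mem_inter_iff, mem_Ici, mem_Icc]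
      constructor
      · rintro ⟨h1, _, h2⟩; exact ⟨h1, h2⟩
      · rintro ⟨h1, h2⟩; exact ⟨h1, by linarith, h2⟩)))),
    ← ENNReal.ofReal_mul (by positivity),
    ← ENNReal.ofReal_add (by positivity) (by positivity),
    ← ENNReal.ofReal_add (by positivity) (by positivity)]
  · congr 1; ring
  case d2 =>
    exact (Set.disjoint_left.mpr (by
      rintro ⟨x, y⟩ ⟨hx, _⟩ ⟨⟨hx', _⟩, _⟩; exact absurd hx' (not_le.mpr hx)))
  case d3 =>
    rw [Set.disjoint_right]
    rintro ⟨x, y⟩ ⟨hx, _⟩ (⟨hx', _⟩ | ⟨⟨_, hx'⟩, _⟩) <;>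
      simp only [mem_Ici, mem_Iio] at hx hx' <;> linarith
end
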